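/- Fix ε ∈ (0,1). Then lim_{p→0⁺} (−log(p))·I_p((1+ε)·p) = (log(1+ε))²/2, where for p small enough that (1+ε)·p < 1 one sets I_p(y) = log(y)·log(log(p)/log(y)) + log(y/p). (Equivalently, the AMS large-deviations rate for a relative error ε satisfies I_p((1+ε)p) ~ (log(1+ε))²/(−2·log(p)) as p → 0.) -/
import Mathlib


open Filter

lemma aux_taylor_bound {t : ℝ} (ht : t ≠ 0) (ht2 : |t| < 1/2) :
    ‖((1 + t) * Real.log (1 + t) - t) / t ^ 2 - 1/2‖ ≤ 7/2 * |t| := by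
  have hlt : |(-t)| < 1 := by rw [abs_neg]; linarith
  have h := Real.abs_log_sub_add_sum_range_le hlt 2
  simp only [Finset.sum_range_succ, Finset.sum_range_zero] at h
  norm_num at h
  set r := Real.log (1 + t) - t + t^2/2 with hr
  have hre : -t + t ^ 2 / 2 + Real.log (1 + t) = r := by rw [hr]; ring
  rw [hre] at h
  -- h : |r| ≤ |t|^3 / (1 - |t|)
  have habs : 0 < |t| := abs_pos.mpr ht
  have hden : (1:ℝ)/2 ≤ 1 - |t| := by linarith
  have hr2 : |r| ≤ 2 * |t|^3 := by
    calc |r| ≤ |t| ^ 3 / (1 - |t|) := h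
    _ ≤ |t|^3 / (1/2) := by
        apply div_le_div_of_nonneg_left (by positivity) (by norm_num) hden
    _ = 2 * |t|^3 := by ring
  have hid : ((1 + t) * Real.log (1 + t) - t) / t ^ 2 - 1/2 = (1 + t) * r / t^2 - t/2 := by
    rw [hr]; field_simp; ring
  rw [Real.norm_eq_abs, hid]
  have h1 : |(1 + t) * r / t^2| ≤ 3 * |t| := by
    rw [abs_div, abs_mul]
    have h1t' : |1 + t| ≤ 3/2 := by
      calc |1 + t| ≤ |(1:ℝ)| + |t| := abs_add_le _ _
      _ ≤ 3/2 := by rw [abs_one]; linarith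
    have ht2' : |t ^ 2| = |t|^2 := by rw [abs_pow]
    rw [ht2']
    rw [div_le_iff₀ (by positivity)]
    calc |1 + t| * |r| ≤ (3/2) * (2 * |t|^3) :=
          mul_le_mul h1t' hr2 (abs_nonneg _) (by norm_num)
    _ = 3 * |t| * |t|^2 := by ring
  calc |(1 + t) * r / t^2 - t/2| ≤ |(1 + t) * r / t^2| + |t/2| := abs_sub _ _
  _ ≤ 3 * |t| + |t|/2 := by
      refine add_le_add h1 ?_
      rw [abs_div]; norm_num
  _ = 7/2 * |t| := by ring

lemma aux_tendsto :
    Tendsto (fun t : ℝ => ((1 + t) * Real.log (1 + t) - t) / t ^ 2)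
      (nhdsWithin 0 {(0:ℝ)}ᶜ) (nhds (1/2)) := by
  have key : Tendsto (fun t : ℝ => ((1 + t) * Real.log (1 + t) - t) / t ^ 2 - 1/2)
      (nhdsWithin 0 {(0:ℝ)}ᶜ) (nhds 0) := by
    apply squeeze_zero_norm' (a := fun t => 7/2 * |t|)
    · have h1 : ∀ᶠ t : ℝ in nhdsWithin 0 {(0:ℝ)}ᶜ, |t| < 1/2 := by
        apply Filter.Eventually.filter_mono nhdsWithin_le_nhds
        have : Tendsto (fun t : ℝ => |t|) (nhds 0) (nhds 0) := by
          simpa using (continuous_abs.tendsto (0:ℝ))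
        exact this.eventually_lt_const (by norm_num)
      filter_upwards [h1, self_mem_nhdsWithin] with t h1 h2
      exact aux_taylor_bound h2 h1
    · have : Tendsto (fun t : ℝ => 7/2 * |t|) (nhds 0) (nhds (7/2 * |(0:ℝ)|)) :=
        (continuous_const.mul continuous_abs).tendsto 0
      simpa using this.mono_left nhdsWithin_le_nhds
  have := key.add_const (1/2)
  simpa using this

/-- The AMS rate function `I_p`, defined on `(0,1)`. -/
noncomputable def amsRate (p y : ℝ) : ℝ :=
  Real.log y * Real.log (Real.log p / Real.log y) + Real.log (y / p)

/-- As `p → 0⁺` (along `(0,1)`), `(−log p)·I_p((1+ε)p) → (log(1+ε))²/2`. -/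
theorem tendsto_amsRate_relative_error (ε : ℝ) (hε : ε ∈ Set.Ioo (0 : ℝ) 1) :
    Tendsto (fun p : ℝ => (-Real.log p) * amsRate p ((1 + ε) * p))
      (nhdsWithin 0 (Set.Ioo (0 : ℝ) 1))
      (nhds ((Real.log (1 + ε)) ^ 2 / 2)) := by
  obtain ⟨hε0, hε1⟩ := hε
  set c := Real.log (1 + ε) with hc
  have h1ε : (1:ℝ) < 1 + ε := by linarith
  have hcpos : 0 < c := Real.log_pos h1ε
  -- Step 1 : c / log p tends to 0 within {0}ᶜ
  have hlog : Tendsto Real.log (nhdsWithin 0 (Set.Ioo (0:ℝ) 1)) atBot :=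
    Real.tendsto_log_nhdsGT_zero.mono_left
      (nhdsWithin_mono 0 Set.Ioo_subset_Ioi_self)
  have hneg : Tendsto (fun p : ℝ => -Real.log p) (nhdsWithin 0 (Set.Ioo (0:ℝ) 1)) atTop :=
    tendsto_neg_atBot_atTop.comp hlog
  have hinv : Tendsto (fun p : ℝ => (-Real.log p)⁻¹) (nhdsWithin 0 (Set.Ioo (0:ℝ) 1)) (nhds 0) :=
    hneg.inv_tendsto_atTop
  have hdiv : Tendsto (fun p : ℝ => c / Real.log p) (nhdsWithin 0 (Set.Ioo (0:ℝ) 1)) (nhds 0) := by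
    have := hinv.const_mul (-c)
    simp only [mul_zero] at this
    refine this.congr (fun p => ?_)
    rw [div_eq_mul_inv]
    rcases eq_or_ne (Real.log p) 0 with h | h
    · simp [h]
    · field_simp
  have hlogneg : ∀ᶠ p : ℝ in nhdsWithin 0 (Set.Ioo (0:ℝ) 1), Real.log p < 0 := by
    filter_upwards [self_mem_nhdsWithin] with p hp
    exact Real.log_neg hp.1 hp.2
  have hdiv' : Tendsto (fun p : ℝ => c / Real.log p) (nhdsWithin 0 (Set.Ioo (0:ℝ) 1))
      (nhdsWithin 0 {(0:ℝ)}ᶜ) := by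
    rw [tendsto_nhdsWithin_iff]
    refine ⟨hdiv, ?_⟩
    filter_upwards [hlogneg] with p hp
    simp only [Set.mem_compl_iff, Set.mem_singleton_iff]
    exact div_ne_zero hcpos.ne' hp.ne
  -- Step 2 : limit of the model function
  have hmodel : Tendsto (fun p : ℝ => c^2 *
      (((1 + c / Real.log p) * Real.log (1 + c / Real.log p) - c / Real.log p)
        / (c / Real.log p) ^ 2))
      (nhdsWithin 0 (Set.Ioo (0:ℝ) 1)) (nhds (c^2 * (1/2))) :=
    ((aux_tendsto.comp hdiv').const_mul _)
  -- Step 3 : eventual equality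
  have heq : ∀ᶠ p : ℝ in nhdsWithin 0 (Set.Ioo (0:ℝ) 1),
      c^2 * (((1 + c / Real.log p) * Real.log (1 + c / Real.log p) - c / Real.log p)
        / (c / Real.log p) ^ 2)
      = (-Real.log p) * amsRate p ((1 + ε) * p) := by
    have hsmall : ∀ᶠ p : ℝ in nhdsWithin 0 (Set.Ioo (0:ℝ) 1), p < (1 + ε)⁻¹ :=
      (eventually_lt_nhds (by positivity : (0:ℝ) < (1 + ε)⁻¹)).filter_mono nhdsWithin_le_nhds
    filter_upwards [hsmall, self_mem_nhdsWithin] with p hps hp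
    set L := Real.log p with hL
    have hp0 : 0 < p := hp.1
    have hLlt : L < -c := by
      have := Real.log_lt_log hp0 hps
      rwa [Real.log_inv] at this
    have hLne : L ≠ 0 := by intro h; rw [h] at hLlt; linarith
    have hcLne : c + L ≠ 0 := by intro h; nlinarith
    have hcLneg : c + L < 0 := by linarith
    have hLneg : L < 0 := by linarith
    -- rewrite amsRate
    have hlogmul : Real.log ((1 + ε) * p) = c + L := Real.log_mul (by linarith) hp0.ne'
    have hlogdiv : Real.log ((1 + ε) * p / p) = c := by
      rw [mul_div_assoc, div_self hp0.ne', mul_one]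
    have h1t : 1 + c / L = (c + L) / L := by field_simp; ring
    have hlograt : Real.log (L / (c + L)) = -Real.log (1 + c / L) := by
      rw [h1t, ← Real.log_inv]
      congr 1
      field_simp
    rw [amsRate, hlogmul, hlogdiv, hlograt, h1t]
    have hlog2 : Real.log ((c + L) / L) = Real.log (c + L) - Real.log L := by
      exact Real.log_div hcLne hLne
    set S := Real.log ((c + L) / L) with hS
    field_simp
    ring
  rw [show (Real.log (1 + ε)) ^ 2 / 2 = c^2 * (1/2) by rw [hc]; ring]
  exact hmodel.congr' heq
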